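/- Let G = ∏_{n∈ℕ} ℤ/2 with the product topology, acting on X = ∏_{n∈ℕ} 𝕋 coordinatewise, where each factor ℤ/2 is realized as {±1} ⊂ 𝕋 acting on 𝕋 by multiplication. Let x = (1,1,1,…) ∈ X. If L is a closed subgroup of G, U is a G-invariant open neighborhood of x in X, and φ: U → G/L is a continuous G-equivariant map, then L has finite index in G (equivalently, G/L is finite). -/

import Mathlib

/-- `-1` as an element of the circle group `𝕋 ⊂ ℂ`. -/
noncomputable def negOneCircle : Circle := ⟨-1, by simp [Submonoid.unitSphere]⟩

lemma negOne_mul_negOne : negOneCircle * negOneCircle = 1 := by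
  ext
  simp only [Circle.coe_mul, Circle.coe_one]
  show (-1 : ℂ) * -1 = 1
  norm_num

/-- The embedding `ℤ/2 = {±1} ⊂ 𝕋`. -/
noncomputable def chi (a : Multiplicative (ZMod 2)) : Circle :=
  if a = 1 then 1 else negOneCircle

lemma chi_one : chi 1 = 1 := by simp [chi]

lemma chi_mul (a b : Multiplicative (ZMod 2)) : chi (a * b) = chi a * chi b := by
  have key : ∀ c : Multiplicative (ZMod 2), c = 1 ∨ c = Multiplicative.ofAdd 1 := by
    decide
  have h2 : (Multiplicative.ofAdd (1 : ZMod 2)) * Multiplicative.ofAdd 1 = 1 := by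
    decide
  have hne : (Multiplicative.ofAdd (1 : ZMod 2)) ≠ 1 := by decide
  rcases key a with ha | ha <;> rcases key b with hb | hb <;>
    subst ha <;> subst hb <;>
    simp [chi, hne, h2, negOne_mul_negOne]

/-- The coordinatewise translation action of `G = ∏_{n ∈ ℕ} ℤ/2` on
`X = ∏_{n ∈ ℕ} 𝕋`, each factor `ℤ/2` being realized as `{±1} ⊂ 𝕋` acting on
`𝕋` by multiplication. -/
noncomputable instance prodTranslationAction :
    MulAction (ℕ → Multiplicative (ZMod 2)) (ℕ → Circle) where
  smul g x := fun n => chi (g n) * x n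
  one_smul x := by
    funext n
    show chi 1 * x n = x n
    rw [chi_one, one_mul]
  mul_smul g h x := by
    funext n
    show chi (g n * h n) * x n = chi (g n) * (chi (h n) * x n)
    rw [chi_mul, mul_assoc]

lemma exp_pi_eq_negOne : Circle.exp Real.pi = negOneCircle := by
  ext
  rw [Circle.coe_exp]
  simp [negOneCircle, Complex.exp_pi_mul_I]

section KEY
abbrev Gp := ℕ → Multiplicative (ZMod 2)

theorem key_lemma
    (L : Subgroup Gp) (hL : IsClosed (L : Set Gp))
    (U : Set (ℕ → Circle)) (hUopen : IsOpen U)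
    (hxU : (fun _ => (1 : Circle)) ∈ U)
    (hUinv : ∀ (g : Gp) (y : ℕ → Circle), y ∈ U → g • y ∈ U)
    (φ : U → Gp ⧸ L) (hφc : Continuous φ)
    (hφeq : ∀ (g : Gp) (y : ℕ → Circle) (hy : y ∈ U),
      φ ⟨g • y, hUinv g y hy⟩ = g • φ ⟨y, hy⟩)
    (I : Finset ℕ) (u : ℕ → Set Circle)
    (hu : ∀ n ∈ I, IsOpen (u n) ∧ (fun _ => (1:Circle)) n ∈ u n)
    (hsub : (↑I : Set ℕ).pi u ⊆ U)
    (g : Gp) (hg : ∀ n ∈ I, g n = 1) : g ∈ L := by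
  classical
  -- the path from x to g • x inside U
  set p : ℝ → ℕ → Circle := fun t n => if g n = 1 then 1 else Circle.exp (Real.pi * t)
    with hp
  have hpU : ∀ t, p t ∈ U := by
    intro t
    apply hsub
    intro n hn
    have : p t n = 1 := by simp [hp, hg n hn]
    rw [this]
    exact (hu n hn).2
  have hp0 : p 0 = (fun _ => (1 : Circle)) := by
    funext n
    by_cases h : g n = 1 <;> simp [hp, h]
  have hp1 : p 1 = g • (fun _ => (1 : Circle)) := by
    funext n
    show p 1 n = chi (g n) * 1
    by_cases h : g n = 1
    · simp [hp, h, chi]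
    · simp [hp, h, chi, exp_pi_eq_negOne]
  have hpc : Continuous p := by
    apply continuous_pi
    intro n
    by_cases h : g n = 1
    · simp only [hp, if_pos h]; exact continuous_const
    · simp only [hp, if_neg h]
      exact Circle.exp.continuous.comp (continuous_const.mul continuous_id)
  set f : ℝ → Gp ⧸ L := fun t => φ ⟨p t, hpU t⟩ with hf
  have hfc : Continuous f := hφc.comp (hpc.subtype_mk _)
  have hf0 : f 0 = φ ⟨(fun _ => 1), hxU⟩ := by
    simp only [hf]; congr 1; exact Subtype.ext hp0
  have hf1 : f 1 = g • φ ⟨(fun _ => 1), hxU⟩ := by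
    have h1 : f 1 = φ ⟨g • (fun _ => (1:Circle)), hUinv g _ hxU⟩ := by
      simp only [hf]; congr 1; exact Subtype.ext hp1
    rw [h1, hφeq]
  obtain ⟨h, hh⟩ := QuotientGroup.mk_surjective (φ ⟨(fun _ => 1), hxU⟩)
  by_contra hgL
  -- build a clopen set separating f 0 from f 1
  obtain ⟨F, v, hv, hvsub⟩ := isOpen_pi_iff.mp hL.isOpen_compl g hgL
  set K' : Subgroup Gp := Subgroup.pi ↑F (fun _ => ⊥) with hK'
  have hK'open : IsOpen (K' : Set Gp) := by
    have : (K' : Set Gp) = (↑F : Set ℕ).pi (fun _ => ({1} : Set (Multiplicative (ZMod 2)))) := by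
      ext a
      simp [hK', Subgroup.mem_pi, Set.mem_pi, Subgroup.mem_bot]
    rw [this]
    exact isOpen_set_pi F.finite_toSet (fun a _ => isOpen_discrete _)
  have hgK' : ∀ k ∈ K', g * k ∉ L := by
    intro k hk hmem
    have : g * k ∈ (↑F : Set ℕ).pi v := by
      intro n hn
      have hk1 : k n = 1 := Subgroup.mem_bot.mp ((Subgroup.mem_pi _).mp hk n hn)
      show (g n) * (k n) ∈ v n
      rw [hk1, mul_one]
      exact (hv n hn).2
    exact hvsub this hmem
  set M : Subgroup Gp := K' ⊔ L with hM
  have hgM : g ∉ M := by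
    intro hm
    rw [← SetLike.mem_coe, hM, Subgroup.mul_normal] at hm
    obtain ⟨k, hk, l, hl, hkl⟩ := hm
    have hkl' : k * l = g := hkl
    have : g * k⁻¹ = l := by
      rw [← hkl', mul_comm k l, mul_inv_cancel_right]
    exact hgK' k⁻¹ (K'.inv_mem hk) (this ▸ hl)
  have hMopen : IsOpen (M : Set Gp) := Subgroup.isOpen_mono le_sup_left hK'open
  have hMclosed : IsClosed (M : Set Gp) := Subgroup.isClosed_of_isOpen M hMopen
  set S : Set Gp := (fun a => a * h⁻¹) ⁻¹' (M : Set Gp) with hS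
  have hSopen : IsOpen S := hMopen.preimage (continuous_mul_right _)
  have hSclosed : IsClosed S := hMclosed.preimage (continuous_mul_right _)
  set q : Gp → Gp ⧸ L := QuotientGroup.mk with hq
  set V : Set (Gp ⧸ L) := q '' S with hV
  have hqV : q ⁻¹' V = S := by
    ext a
    constructor
    · rintro ⟨b, hb, hab⟩
      have hba : b⁻¹ * a ∈ L := QuotientGroup.eq.mp hab
      have : a * h⁻¹ = (b * h⁻¹) * (b⁻¹ * a) := by
        rw [mul_comm a h⁻¹, mul_comm b h⁻¹, mul_assoc, mul_inv_cancel_left]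
      show a * h⁻¹ ∈ M
      rw [this]
      exact M.mul_mem hb (le_sup_right (a := K') hba)
    · intro ha
      exact ⟨a, ha, rfl⟩
  have hVopen : IsOpen V := QuotientGroup.isOpenMap_coe S hSopen
  have hVclosed : IsClosed V := by
    rw [← isOpen_compl_iff]
    have : Vᶜ = q '' Sᶜ := by
      ext z
      obtain ⟨a, rfl⟩ := QuotientGroup.mk_surjective z
      constructor
      · intro hz
        refine ⟨a, ?_, rfl⟩
        intro haS
        exact hz ⟨a, haS, rfl⟩
      · rintro ⟨b, hb, hba⟩ hmem
        have : b ∈ q ⁻¹' V := by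
          show q b ∈ V
          rw [hba]; exact hmem
        rw [hqV] at this
        exact hb this
    rw [this]
    exact QuotientGroup.isOpenMap_coe Sᶜ hSclosed.isOpen_compl
  have h0V : f 0 ∈ V := by
    rw [hf0, ← hh]
    refine ⟨h, ?_, rfl⟩
    show h * h⁻¹ ∈ M
    rw [mul_inv_cancel]
    exact M.one_mem
  have h1V : f 1 ∉ V := by
    rw [hf1, ← hh]
    intro hmem
    have hmem' : g * h ∈ q ⁻¹' V := hmem
    rw [hqV] at hmem'
    have : g * h * h⁻¹ = g := by group
    rw [hS] at hmem'
    have : g ∈ M := by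
      have := hmem'
      simpa [mul_assoc] using this
    exact hgM this
  have hclopen : IsClopen (f ⁻¹' V) := ⟨hVclosed.preimage hfc, hVopen.preimage hfc⟩
  rcases isClopen_iff.mp hclopen with he | huniv
  · have : (0:ℝ) ∈ f ⁻¹' V := h0V
    rw [he] at this
    exact this
  · have : (1:ℝ) ∈ f ⁻¹' V := by rw [huniv]; trivial
    exact h1V this
end KEY

/-- Let `G = ∏_{n ∈ ℕ} ℤ/2` with the product topology act on
`X = ∏_{n ∈ ℕ} 𝕋` coordinatewise, each factor `ℤ/2` realized as `{±1} ⊂ 𝕋`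
acting by multiplication, and let `x = (1, 1, 1, …) ∈ X`.  If `L` is a closed
subgroup of `G`, `U` is a `G`-invariant open neighborhood of `x` in `X`, and
`φ : U → G/L` is a continuous `G`-equivariant map, then `L` has finite index
in `G` (equivalently, `G/L` is finite). -/
theorem slice_subgroup_of_finite_index
    (L : Subgroup (ℕ → Multiplicative (ZMod 2)))
    (hL : IsClosed (L : Set (ℕ → Multiplicative (ZMod 2))))
    (U : Set (ℕ → Circle)) (hUopen : IsOpen U)
    (hxU : (fun _ => (1 : Circle)) ∈ U)
    (hUinv : ∀ (g : ℕ → Multiplicative (ZMod 2)) (y : ℕ → Circle),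
      y ∈ U → g • y ∈ U)
    (φ : U → (ℕ → Multiplicative (ZMod 2)) ⧸ L) (hφc : Continuous φ)
    (hφeq : ∀ (g : ℕ → Multiplicative (ZMod 2)) (y : ℕ → Circle) (hy : y ∈ U),
      φ ⟨g • y, hUinv g y hy⟩ = g • φ ⟨y, hy⟩) :
    Finite ((ℕ → Multiplicative (ZMod 2)) ⧸ L) := by
  classical
  obtain ⟨I, u, hu, hsub⟩ := isOpen_pi_iff.mp hUopen _ hxU
  have key : ∀ g : Gp, (∀ n ∈ I, g n = 1) → g ∈ L := fun g hg =>
    key_lemma L hL U hUopen hxU hUinv φ hφc hφeq I u hu hsub g hg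
  let r : Gp →* ({n // n ∈ I} → Multiplicative (ZMod 2)) :=
    MonoidHom.mk' (fun g i => g i.1) (fun a b => rfl)
  have hker : r.ker ≤ L := by
    intro g hg
    exact key g fun n hn => congrFun hg ⟨n, hn⟩
  haveI : Finite (Gp ⧸ r.ker) :=
    Finite.of_injective _ (QuotientGroup.kerLift_injective r)
  refine Finite.of_surjective
    (QuotientGroup.map r.ker L (MonoidHom.id _) (by simpa using hker)) ?_
  intro z
  obtain ⟨a, rfl⟩ := QuotientGroup.mk_surjective z
  exact ⟨a, QuotientGroup.map_mk _ _ _ _ a⟩
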